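/- Suppose p₁₁ > 1, let y₁⁰, y₂⁰ > 0, and suppose that ∫₀^∞ h₁(s) ds > y₁⁰^{1−p₁₁} / ((p₁₁−1)·(y₂⁰)^{p₁₂}) (where the improper integral on the left may be infinite). Then there is no pair of differentiable functions y₁, y₂ : [0,∞) → (0,∞) with y₁(0) = y₁⁰, y₂(0) = y₂⁰ solving the ODE system on all of [0,∞). -/

import Mathlib

open MeasureTheory Set

/-- Proposition 5.3 of the paper. If `p₁₁ > 1` and
`∫₀^∞ h₁(s) ds > y₁⁰^{1-p₁₁} / ((p₁₁-1) (y₂⁰)^{p₁₂})` (the improper integral,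
taken as a Lebesgue integral with values in `[0,∞]`, may be infinite), then the
ODE system has no global positive solution on `[0,∞)` with initial values
`y₁⁰, y₂⁰ > 0`. -/
theorem statement12 (p11 p12 p21 p22 : ℝ)
    (hp11 : 0 ≤ p11) (hp12 : 0 ≤ p12) (hp21 : 0 ≤ p21) (hp22 : 0 ≤ p22)
    (h1 h2 : ℝ → ℝ)
    (hh1c : ContinuousOn h1 (Set.Ici 0)) (hh2c : ContinuousOn h2 (Set.Ici 0))
    (hh1p : ∀ t : ℝ, 0 ≤ t → 0 < h1 t) (hh2p : ∀ t : ℝ, 0 ≤ t → 0 < h2 t)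
    (hp : 1 < p11)
    (y10 y20 : ℝ) (hy10 : 0 < y10) (hy20 : 0 < y20)
    (hint : ENNReal.ofReal (y10 ^ (1 - p11) / ((p11 - 1) * y20 ^ p12)) <
      ∫⁻ s in Set.Ici (0:ℝ), ENNReal.ofReal (h1 s)) :
    ¬ ∃ y1 y2 : ℝ → ℝ,
        y1 0 = y10 ∧ y2 0 = y20 ∧
        (∀ t : ℝ, 0 ≤ t → 0 < y1 t) ∧ (∀ t : ℝ, 0 ≤ t → 0 < y2 t) ∧
        (∀ t : ℝ, 0 ≤ t →
          HasDerivWithinAt y1 (h1 t * y1 t ^ p11 * y2 t ^ p12) (Set.Ici 0) t) ∧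
        (∀ t : ℝ, 0 ≤ t →
          HasDerivWithinAt y2 (h2 t * y2 t ^ p22 * y1 t ^ p21) (Set.Ici 0) t) := by
  rintro ⟨y1, y2, hy1i, hy2i, hy1p, hy2p, hd1, hd2⟩
  set C : ℝ := y10 ^ (1 - p11) / ((p11 - 1) * y20 ^ p12) with hCdef
  have hden : 0 < (p11 - 1) * y20 ^ p12 :=
    mul_pos (by linarith) (Real.rpow_pos_of_pos hy20 _)
  -- y2 is monotone, hence `y20 ≤ y2 t`
  have hy2cont : ContinuousOn y2 (Ici 0) := fun t ht => (hd2 t ht).continuousWithinAt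
  have hy2mono : MonotoneOn y2 (Ici 0) := by
    apply monotoneOn_of_hasDerivWithinAt_nonneg (convex_Ici 0) hy2cont
      (f' := fun t => h2 t * y2 t ^ p22 * y1 t ^ p21)
    · intro x hx
      rw [interior_Ici] at hx ⊢
      exact ((hd2 x hx.le).hasDerivAt (Ici_mem_nhds hx)).hasDerivWithinAt
    · intro x hx
      rw [interior_Ici] at hx
      have := hh2p x hx.le
      have h2p := Real.rpow_pos_of_pos (hy2p x hx.le) p22
      have h1p := Real.rpow_pos_of_pos (hy1p x hx.le) p21
      positivity
  have hy2ge : ∀ t : ℝ, 0 ≤ t → y20 ≤ y2 t := fun t ht => by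
    rw [← hy2i]; exact hy2mono self_mem_Ici ht ht
  -- the cumulative integral of h1
  set I : ℝ → ℝ := fun u => ∫ x in (0:ℝ)..u, h1 x with hIdef
  have hIint : ∀ t : ℝ, 0 ≤ t → IntervalIntegrable h1 volume 0 t := by
    intro t ht
    apply ContinuousOn.intervalIntegrable
    apply hh1c.mono
    rw [uIcc_of_le ht]
    exact Icc_subset_Ici_self
  have hIderivW : ∀ t ∈ Ici (0:ℝ), HasDerivWithinAt I (h1 t) (Ici 0) t := by
    intro t ht
    rcases eq_or_lt_of_le (mem_Ici.mp ht) with h0 | h0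
    · subst h0
      exact intervalIntegral.integral_hasDerivWithinAt_right (hIint 0 le_rfl)
        ((hh1c.mono Ioi_subset_Ici_self).stronglyMeasurableAtFilter_nhdsWithin
          measurableSet_Ioi 0)
        ((hh1c 0 self_mem_Ici).mono Ioi_subset_Ici_self)
    · have : HasDerivAt I (h1 t) t := by
        apply intervalIntegral.integral_hasDerivAt_right (hIint t ht)
        · exact (hh1c.mono Ioi_subset_Ici_self).stronglyMeasurableAtFilter isOpen_Ioi t h0
        · exact (hh1c t ht).continuousAt (Ici_mem_nhds h0)
      exact this.hasDerivWithinAt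
  -- the Lyapunov function G
  set G : ℝ → ℝ := fun t => y1 t ^ (1 - p11) + (p11 - 1) * y20 ^ p12 * I t with hGdef
  have hy1cont : ContinuousOn y1 (Ici 0) := fun t ht => (hd1 t ht).continuousWithinAt
  have hGcont : ContinuousOn G (Ici 0) := by
    apply ContinuousOn.add
    · exact hy1cont.rpow_const (fun x hx => Or.inl (hy1p x hx).ne')
    · exact (continuousOn_const.mul (fun t ht => (hIderivW t ht).continuousWithinAt))
  have hGanti : AntitoneOn G (Ici 0) := by
    apply antitoneOn_of_hasDerivWithinAt_nonpos (convex_Ici 0) hGcont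
      (f' := fun t => (p11 - 1) * h1 t * (y20 ^ p12 - y2 t ^ p12))
    · intro x hx
      rw [interior_Ici] at hx ⊢
      have hx0 : (0:ℝ) ≤ x := hx.le
      have hy1x := hy1p x hx0
      have hD1 : HasDerivWithinAt (fun t => y1 t ^ (1 - p11))
          ((h1 x * y1 x ^ p11 * y2 x ^ p12) * (1 - p11) * y1 x ^ (1 - p11 - 1)) (Ioi 0) x :=
        (((hd1 x hx0).hasDerivAt (Ici_mem_nhds hx)).rpow_const
          (Or.inl hy1x.ne')).hasDerivWithinAt
      have hD2 : HasDerivWithinAt (fun t => (p11 - 1) * y20 ^ p12 * I t)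
          ((p11 - 1) * y20 ^ p12 * h1 x) (Ioi 0) x :=
        ((hIderivW x hx0).mono Ioi_subset_Ici_self).const_mul _
      have key : y1 x ^ p11 * y1 x ^ (1 - p11 - 1) = 1 := by
        rw [← Real.rpow_add hy1x]
        norm_num
      refine (hD1.add hD2).congr_deriv ?_
      have : (h1 x * y1 x ^ p11 * y2 x ^ p12) * (1 - p11) * y1 x ^ (1 - p11 - 1)
          = (1 - p11) * h1 x * y2 x ^ p12 * (y1 x ^ p11 * y1 x ^ (1 - p11 - 1)) := by ring
      rw [this, key]
      ring
    · intro x hx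
      rw [interior_Ici] at hx
      have hx0 : (0:ℝ) ≤ x := hx.le
      have h1 : y20 ^ p12 ≤ y2 x ^ p12 :=
        Real.rpow_le_rpow hy20.le (hy2ge x hx0) hp12
      have h2 := (hh1p x hx0).le
      have : (0:ℝ) ≤ p11 - 1 := by linarith
      have := mul_nonneg (mul_nonneg this h2) (sub_nonneg.2 h1)
      nlinarith
  -- hence `I t ≤ C` for all `t ≥ 0`
  have hIbound : ∀ t : ℝ, 0 ≤ t → I t ≤ C := by
    intro t ht
    have hG := hGanti self_mem_Ici ht ht
    have hI0 : I 0 = 0 := intervalIntegral.integral_same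
    have hy1t : 0 < y1 t ^ (1 - p11) := Real.rpow_pos_of_pos (hy1p t ht) _
    have : (p11 - 1) * y20 ^ p12 * I t ≤ y10 ^ (1 - p11) := by
      simp only [hGdef, hI0, mul_zero, add_zero, hy1i] at hG
      linarith
    rw [hCdef, le_div_iff₀ hden]
    linarith [this]
  -- transfer to the Lebesgue integral
  have hnn : ∀ᵐ x ∂(volume.restrict (Ici (0:ℝ))), 0 ≤ h1 x := by
    filter_upwards [ae_restrict_mem measurableSet_Ici] with x hx
    exact (hh1p x hx).le
  have hunion : Ici (0:ℝ) = ⋃ n : ℕ, Icc (0:ℝ) n := by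
    ext x
    simp only [mem_Ici, mem_iUnion, mem_Icc]
    constructor
    · intro hx
      obtain ⟨n, hn⟩ := exists_nat_ge x
      exact ⟨n, hx, hn⟩
    · rintro ⟨n, hx, -⟩; exact hx
  have hbound : ∫⁻ s in Ici (0:ℝ), ENNReal.ofReal (h1 s) ≤ ENNReal.ofReal C := by
    rw [hunion, setLIntegral_iUnion_of_directed _
      (Monotone.directed_le fun m n hmn => Icc_subset_Icc le_rfl (Nat.cast_le.2 hmn))]
    apply iSup_le
    intro n
    have hn0 : (0:ℝ) ≤ n := Nat.cast_nonneg n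
    have hintg : IntegrableOn h1 (Icc (0:ℝ) n) := by
      apply ContinuousOn.integrableOn_compact isCompact_Icc
      exact hh1c.mono Icc_subset_Ici_self
    have hnnIcc : ∀ᵐ x ∂(volume.restrict (Icc (0:ℝ) (n:ℝ))), 0 ≤ h1 x := by
      filter_upwards [ae_restrict_mem measurableSet_Icc] with x hx
      exact (hh1p x hx.1).le
    rw [← ofReal_integral_eq_lintegral_ofReal hintg hnnIcc]
    apply ENNReal.ofReal_le_ofReal
    have heq : ∫ s in Icc (0:ℝ) n, h1 s = ∫ x in (0:ℝ)..(n:ℝ), h1 x := by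
      rw [intervalIntegral.integral_of_le hn0, integral_Icc_eq_integral_Ioc]
    rw [heq]
    exact hIbound n hn0
  exact absurd hbound hint.not_ge
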